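/- Let G be a graph and (H, I) a crown in G. Then |I| ≥ |H|, and the minimum vertex cover size of the induced subgraph G[H ∪ I] equals |H|; moreover H itself is a minimum vertex cover of G[H ∪ I]. -/

import Mathlib

/-- A matching in a simple graph `G`, given as a finite set of edges of `G`
that are pairwise vertex-disjoint. -/
def IsMatching {V : Type*} (G : SimpleGraph V) (M : Finset (Sym2 V)) : Prop :=
  (∀ e ∈ M, e ∈ G.edgeSet) ∧
    ∀ e ∈ M, ∀ f ∈ M, e ≠ f → ∀ v, v ∈ e → v ∉ f

/-- A vertex cover of `G`: a set of vertices meeting every edge. -/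
def IsVertexCover {V : Type*} (G : SimpleGraph V) (S : Finset V) : Prop :=
  ∀ ⦃a b⦄, G.Adj a b → a ∈ S ∨ b ∈ S

/-- The subgraph of `G` induced on the vertex set `T` (other vertices become
isolated). -/
def inducedOn {V : Type*} (G : SimpleGraph V) (T : Set V) : SimpleGraph V where
  Adj a b := G.Adj a b ∧ a ∈ T ∧ b ∈ T
  symm := ⟨fun _ _ ⟨h, ha, hb⟩ => ⟨h.symm, hb, ha⟩⟩
  loopless := ⟨fun a ⟨h, _, _⟩ => G.loopless.irrefl a h⟩

/-- For a crown `(H, I)` in `G`: `|I| ≥ |H|`, `H` is a vertex cover of the induced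
subgraph `G[H ∪ I]`, and every vertex cover of `G[H ∪ I]` has size at least `|H|`
(so `H` is a minimum vertex cover of `G[H ∪ I]`, of size `|H|`). -/
theorem stmt19 {V : Type*} [Fintype V] [DecidableEq V] (G : SimpleGraph V)
    (H I : Finset V)
    (hind : ∀ a ∈ I, ∀ b ∈ I, ¬ G.Adj a b)
    (hN : ∀ b, b ∈ H ↔ ∃ a ∈ I, G.Adj a b)
    (M : Finset (Sym2 V)) (hM : IsMatching G M)
    (hMbtw : ∀ e ∈ M, ∃ a ∈ H, ∃ b ∈ I, e = s(a, b))
    (hMsat : ∀ a ∈ H, ∃ e ∈ M, a ∈ e) :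
    H.card ≤ I.card ∧
    IsVertexCover (inducedOn G (↑H ∪ ↑I)) H ∧
    ∀ S : Finset V, IsVertexCover (inducedOn G (↑H ∪ ↑I)) S → H.card ≤ S.card := by
  classical
  have hdisj : ∀ a ∈ H, a ∉ I := by
    intro a ha hai
    obtain ⟨a', ha', hadj⟩ := (hN a).mp ha
    exact hind a' ha' a hai hadj
  have key : ∀ a, ∃ b, a ∈ H → b ∈ I ∧ G.Adj a b ∧ s(a, b) ∈ M := by
    intro a
    by_cases ha : a ∈ H
    · obtain ⟨e, heM, hae⟩ := hMsat a ha
      obtain ⟨h, hh, b, hb, rfl⟩ := hMbtw e heM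
      have hadj : G.Adj h b := hM.1 _ heM
      have hah : a = h := by
        rcases Sym2.mem_iff.mp hae with rfl | rfl
        · rfl
        · exact absurd hb (hdisj a ha)
      subst hah
      exact ⟨b, fun _ => ⟨hb, hadj, heM⟩⟩
    · exact ⟨a, fun h => absurd h ha⟩
  choose f hf using key
  have hfI : ∀ a ∈ H, f a ∈ I := fun a ha => (hf a ha).1
  have hfadj : ∀ a ∈ H, G.Adj a (f a) := fun a ha => (hf a ha).2.1
  have hfM : ∀ a ∈ H, s(a, f a) ∈ M := fun a ha => (hf a ha).2.2
  have hinj : ∀ a₁ ∈ H, ∀ a₂ ∈ H, f a₁ = f a₂ → a₁ = a₂ := by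
    intro a₁ h₁ a₂ h₂ hfe
    have he₁ := hfM a₁ h₁
    have he₂ := hfM a₂ h₂
    have heq : s(a₁, f a₁) = s(a₂, f a₂) := by
      by_contra hne
      exact hM.2 _ he₁ _ he₂ hne (f a₁) (Sym2.mem_mk_right _ _)
        (hfe ▸ Sym2.mem_mk_right _ _)
    rw [hfe] at heq
    rcases Sym2.eq_iff.mp heq with ⟨h, _⟩ | ⟨h, h'⟩
    · exact h
    · exact absurd ((h' ▸ hfI a₂ h₂) : a₂ ∈ I) (hdisj a₂ h₂)
  refine ⟨?_, ?_, ?_⟩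
  · exact Finset.card_le_card_of_injOn f (fun a ha => hfI a ha)
      (fun a₁ h₁ a₂ h₂ => hinj a₁ h₁ a₂ h₂)
  · rintro a b ⟨hadj, hma, hmb⟩
    by_cases ha : a ∈ H
    · exact Or.inl ha
    · by_cases hb : b ∈ H
      · exact Or.inr hb
      · exfalso
        have haI : a ∈ I := by
          rcases hma with h | h
          · exact absurd h ha
          · exact h
        have hbI : b ∈ I := by
          rcases hmb with h | h
          · exact absurd h hb
          · exact h
        exact hind a haI b hbI hadj
  · intro S hS
    have hmem : ∀ a ∈ H, (if a ∈ S then a else f a) ∈ S := by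
      intro a ha
      by_cases haS : a ∈ S
      · simp [haS]
      · have : a ∈ S ∨ f a ∈ S := hS ⟨hfadj a ha,
          Or.inl (by exact_mod_cast ha), Or.inr (by exact_mod_cast hfI a ha)⟩
        simpa [haS] using this.resolve_left haS
    refine Finset.card_le_card_of_injOn (fun a => if a ∈ S then a else f a)
      (fun a ha => hmem a ha) ?_
    intro a₁ h₁ a₂ h₂ heq
    simp only at heq
    by_cases h₁S : a₁ ∈ S <;> by_cases h₂S : a₂ ∈ S <;> simp [h₁S, h₂S] at heq
    · exact heq
    · exact absurd ((heq ▸ hfI a₂ h₂) : a₁ ∈ I) (hdisj a₁ h₁)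
    · exact absurd ((heq ▸ hfI a₁ h₁) : a₂ ∈ I) (hdisj a₂ h₂)
    · exact hinj a₁ h₁ a₂ h₂ heq
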